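/- Let S be an n×n Hermitian quaternionic matrix with eigenvalues t₁ ≤ … ≤ t_n, and let λ be a left eigenvalue whose eigenspace V(λ) = {v : Sv = λv} has dimension at least k. Then t_k ≤ Re(λ) ≤ t_{n−k+1}. -/

import Mathlib

open Quaternion Matrix MulOpposite

section Aux

variable {n : ℕ}

private noncomputable def quatPiEquiv (n : ℕ) :
    (Fin n → ℍ[ℝ]) ≃ₗ[ℍ[ℝ]ᵐᵒᵖ] (Fin n → ℍ[ℝ]ᵐᵒᵖ) where
  toFun v := fun i => op (v i)
  invFun w := fun i => unop (w i)
  map_add' := by intros; funext i; simp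
  map_smul' := by intro c v; funext i; simp [op_smul_eq_mul]
  left_inv := fun v => rfl
  right_inv := fun w => rfl

private lemma finrank_quatPi (n : ℕ) : Module.finrank ℍ[ℝ]ᵐᵒᵖ (Fin n → ℍ[ℝ]) = n := by
  rw [(quatPiEquiv n).finrank_eq]; simp [Module.finrank_pi]

private noncomputable instance : FiniteDimensional ℍ[ℝ]ᵐᵒᵖ (Fin n → ℍ[ℝ]) :=
  Module.Finite.equiv (quatPiEquiv n).symm

private lemma dot_mul_right (w x : Fin n → ℍ[ℝ]) (a : ℍ[ℝ]) :
    w ⬝ᵥ (fun i => x i * a) = (w ⬝ᵥ x) * a := by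
  simp [dotProduct, Finset.sum_mul, mul_assoc]

private lemma dot_sum {ι : Type*} [DecidableEq ι] (s : Finset ι) (w : Fin n → ℍ[ℝ])
    (f : ι → Fin n → ℍ[ℝ]) :
    w ⬝ᵥ (∑ j ∈ s, f j) = ∑ j ∈ s, w ⬝ᵥ f j := by
  simp only [dotProduct, Finset.sum_apply, Finset.mul_sum]
  exact Finset.sum_comm

private lemma re_sum {ι : Type*} [DecidableEq ι] (s : Finset ι) (f : ι → ℍ[ℝ]) :
    (∑ j ∈ s, f j).re = ∑ j ∈ s, (f j).re := by
  induction s using Finset.induction with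
  | empty => simp
  | insert _ _ h ih => simp [Finset.sum_insert h, ih]

private lemma re_mul_comm (a b : ℍ[ℝ]) : (a * b).re = (b * a).re := by
  simp [Quaternion.re_mul]; ring

private lemma mulVec_sum' {ι : Type*} (S : Matrix (Fin n) (Fin n) ℍ[ℝ]) (s : Finset ι)
    (f : ι → Fin n → ℍ[ℝ]) :
    S *ᵥ (∑ j ∈ s, f j) = ∑ j ∈ s, S *ᵥ f j := by
  classical
  funext l
  simp only [Finset.sum_apply]
  show S l ⬝ᵥ (∑ j ∈ s, f j) = _
  rw [dot_sum]
  rfl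

private lemma mulVec_mul_right (S : Matrix (Fin n) (Fin n) ℍ[ℝ]) (w : Fin n → ℍ[ℝ])
    (a : ℍ[ℝ]) : S *ᵥ (fun l => w l * a) = fun l => (S *ᵥ w) l * a := by
  funext l
  exact dot_mul_right (S l) w a

end Aux

theorem left_eigenvalue_real_part_bounds {n : ℕ}
    (S : Matrix (Fin n) (Fin n) ℍ[ℝ]) (hS : S.IsHermitian)
    (t : Fin n → ℝ) (ht : Monotone t) (u : Fin n → Fin n → ℍ[ℝ])
    (horth : ∀ i j, star (u i) ⬝ᵥ u j = if i = j then 1 else 0)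
    (heig : ∀ j, S.mulVec (u j) = fun l => u j l * (t j : ℍ[ℝ]))
    (lam : ℍ[ℝ]) (hlam : ¬ IsUnit (S - lam • (1 : Matrix (Fin n) (Fin n) ℍ[ℝ])))
    (V : Submodule ℍ[ℝ]ᵐᵒᵖ (Fin n → ℍ[ℝ]))
    (hV : (V : Set (Fin n → ℍ[ℝ])) = {v | S.mulVec v = fun i => lam * v i})
    (k : ℕ) (hk : 1 ≤ k) (hkn : k ≤ n)
    (hdim : k ≤ Module.finrank ℍ[ℝ]ᵐᵒᵖ V) :
    t ⟨k - 1, by omega⟩ ≤ lam.re ∧ lam.re ≤ t ⟨n - k, by omega⟩ := by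
  classical
  -- linear independence of u
  have hui : LinearIndependent ℍ[ℝ]ᵐᵒᵖ u := by
    rw [Fintype.linearIndependent_iff]
    intro g hg i
    have h := congrArg (fun v => star (u i) ⬝ᵥ v) hg
    simp only [dotProduct_zero] at h
    rw [show (∑ j, g j • u j) = ∑ j, (fun l => u j l * unop (g j)) from rfl,
        dot_sum] at h
    simp only [dot_mul_right, horth] at h
    rw [Finset.sum_eq_single i (fun j _ hj => by simp [Ne.symm hj]) (by simp)] at h
    simp only [if_pos rfl, one_mul] at h
    exact unop_injective (by simpa using h)
  -- basis
  have : Nonempty (Fin n) := ⟨⟨0, by omega⟩⟩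
  have hcard : Fintype.card (Fin n) = Module.finrank ℍ[ℝ]ᵐᵒᵖ (Fin n → ℍ[ℝ]) := by
    simp [finrank_quatPi]
  let b : Module.Basis (Fin n) ℍ[ℝ]ᵐᵒᵖ (Fin n → ℍ[ℝ]) :=
    basisOfLinearIndependentOfCardEqFinrank hui hcard
  have hb : ∀ j, b j = u j := fun j => by
    simp only [b, coe_basisOfLinearIndependentOfCardEqFinrank]
  -- coefficient extraction
  have hcoef : ∀ (v : Fin n → ℍ[ℝ]) (i : Fin n),
      star (u i) ⬝ᵥ v = unop (b.repr v i) := by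
    intro v i
    conv_lhs => rw [← b.sum_repr v]
    rw [show (∑ j, b.repr v j • b j) = ∑ j, (fun l => b j l * unop (b.repr v j)) from rfl]
    rw [show (∑ j, (fun l => b j l * unop (b.repr v j)))
          = ∑ j, (fun l => u j l * unop (b.repr v j)) from by
        refine Finset.sum_congr rfl fun j _ => ?_; rw [hb], dot_sum]
    simp only [dot_mul_right, horth]
    rw [Finset.sum_eq_single i (fun j _ hj => by simp [Ne.symm hj]) (by simp)]
    simp
  -- expansion of any vector in the u basis
  have hexp : ∀ v : Fin n → ℍ[ℝ],
      v = ∑ j, (fun l => u j l * (star (u j) ⬝ᵥ v)) := by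
    intro v
    conv_lhs => rw [← b.sum_repr v]
    refine Finset.sum_congr rfl fun j _ => ?_
    funext l
    rw [hcoef, hb]
    rfl
  -- dual coefficients
  have hsvd : ∀ (v : Fin n → ℍ[ℝ]) (j : Fin n),
      star v ⬝ᵥ u j = star (star (u j) ⬝ᵥ v) := by
    intro v j
    have := star_dotProduct_star v (star (u j))
    simpa using this
  -- the key Rayleigh computation
  have key : ∀ v : Fin n → ℍ[ℝ], S.mulVec v = (fun i => lam * v i) →
      lam.re * (∑ i, normSq (v i)) = ∑ j, t j * normSq (star (u j) ⬝ᵥ v)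
      ∧ (∑ i, normSq (v i)) = ∑ j, normSq (star (u j) ⬝ᵥ v) := by
    intro v hv
    set c : Fin n → ℍ[ℝ] := fun j => star (u j) ⬝ᵥ v with hc
    -- Parseval
    have par : (∑ i, normSq (v i)) = ∑ j, normSq (c j) := by
      have h1 : star v ⬝ᵥ v = ∑ j, star (c j) * c j := by
        nth_rewrite 2 [hexp v]
        rw [dot_sum]
        refine Finset.sum_congr rfl fun j _ => ?_
        rw [dot_mul_right, hsvd]
      have h2 : star v ⬝ᵥ v = ∑ i, star (v i) * v i := rfl
      have := congrArg QuaternionAlgebra.re (h2.symm.trans h1)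
      rw [re_sum, re_sum] at this
      simpa [Quaternion.star_mul_self] using this
    refine ⟨?_, par⟩
    -- Rayleigh two ways
    have hL : (star v ⬝ᵥ S.mulVec v).re = lam.re * ∑ i, normSq (v i) := by
      rw [hv]
      rw [show star v ⬝ᵥ (fun i => lam * v i) = ∑ i, star (v i) * (lam * v i) from rfl]
      rw [re_sum, Finset.mul_sum]
      refine Finset.sum_congr rfl fun i _ => ?_
      rw [re_mul_comm, mul_assoc, Quaternion.self_mul_star]
      simp [Quaternion.re_mul, mul_comm]
    have hR : (star v ⬝ᵥ S.mulVec v).re = ∑ j, t j * normSq (c j) := by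
      have hmv : S.mulVec v = ∑ j, (fun l => u j l * ((t j : ℍ[ℝ]) * c j)) := by
        nth_rewrite 1 [hexp v]
        rw [mulVec_sum']
        refine Finset.sum_congr rfl fun j _ => ?_
        rw [mulVec_mul_right, heig j]
        funext l
        rw [mul_assoc]
      rw [hmv, dot_sum, re_sum]
      refine Finset.sum_congr rfl fun j _ => ?_
      rw [dot_mul_right, hsvd, show star (u j) ⬝ᵥ v = c j from rfl,
          Quaternion.coe_commutes, ← mul_assoc, Quaternion.star_mul_self,
          ← Quaternion.coe_mul]
      simp [mul_comm]
    rw [← hL, hR]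
  -- vanishing of coefficients on spans
  have hkill : ∀ {m : ℕ} (g : Fin m → Fin n) (v : Fin n → ℍ[ℝ]),
      v ∈ Submodule.span ℍ[ℝ]ᵐᵒᵖ (Set.range (u ∘ g)) →
      ∀ j : Fin n, (∀ i, g i ≠ j) → star (u j) ⬝ᵥ v = 0 := by
    intro m g v hv j hj
    induction hv using Submodule.span_induction with
    | mem x hx =>
      obtain ⟨i, rfl⟩ := hx
      simp only [Function.comp_apply, horth]
      rw [if_neg (fun h => hj i (by exact h.symm ▸ rfl))]
    | zero => simp
    | add x y _ _ hx hy => rw [dotProduct_add, hx, hy, add_zero]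
    | smul a x _ hx =>
      rw [show a • x = fun l => x l * unop a from rfl, dot_mul_right, hx, zero_mul]
  -- existence of a nonzero eigenvector in the intersection
  have hmain : ∀ (g : Fin (n - k + 1) → Fin n), Function.Injective g →
      ∃ v : Fin n → ℍ[ℝ], S.mulVec v = (fun i => lam * v i) ∧ v ≠ 0 ∧
        ∀ j : Fin n, (∀ i, g i ≠ j) → star (u j) ⬝ᵥ v = 0 := by
    intro g hg
    set W := Submodule.span ℍ[ℝ]ᵐᵒᵖ (Set.range (u ∘ g)) with hW
    have hWrank : Module.finrank ℍ[ℝ]ᵐᵒᵖ W = n - k + 1 := by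
      rw [hW, finrank_span_eq_card (hui.comp g hg)]
      simp
    have hsum := Submodule.finrank_sup_add_finrank_inf_eq V W
    have hle : Module.finrank ℍ[ℝ]ᵐᵒᵖ ↥(V ⊔ W) ≤ n := by
      have := Submodule.finrank_le (V ⊔ W)
      rwa [finrank_quatPi] at this
    have hpos : 0 < Module.finrank ℍ[ℝ]ᵐᵒᵖ ↥(V ⊓ W) := by omega
    have hnt : Nontrivial ↥(V ⊓ W) := Module.finrank_pos_iff.mp hpos
    obtain ⟨⟨v, hvmem⟩, hvne⟩ := exists_ne (0 : ↥(V ⊓ W))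
    have hv0 : v ≠ 0 := by
      intro h
      apply hvne
      exact Subtype.ext h
    refine ⟨v, ?_, hv0, ?_⟩
    · have hvV : v ∈ (V : Set (Fin n → ℍ[ℝ])) := hvmem.1
      rw [hV] at hvV
      exact hvV
    · exact fun j hj => hkill g v hvmem.2 j hj
  -- from a good eigenvector, conclude the lower bound
  constructor
  · -- lower bound: use indices ≥ k-1
    obtain ⟨v, hveq, hv0, hvkill⟩ := hmain (fun i => ⟨k - 1 + i.val, by omega⟩)
      (fun i i' h => by
        apply Fin.ext
        have := congrArg Fin.val h
        simp at this
        omega)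
    obtain ⟨h1, h2⟩ := key v hveq
    have hNpos : 0 < ∑ i, normSq (v i) := by
      obtain ⟨i, hi⟩ := Function.ne_iff.mp hv0
      exact Finset.sum_pos' (fun i _ => normSq_nonneg)
        ⟨i, Finset.mem_univ i, lt_of_le_of_ne normSq_nonneg (Ne.symm (normSq_ne_zero.mpr hi))⟩
    have hzero : ∀ j : Fin n, j.val < k - 1 → normSq (star (u j) ⬝ᵥ v) = 0 := by
      intro j hj
      rw [hvkill j (fun i h => by
        have := congrArg Fin.val h
        simp at this
        omega)]
      simp
    have hge : t ⟨k - 1, by omega⟩ * (∑ i, normSq (v i)) ≤ lam.re * (∑ i, normSq (v i)) := by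
      rw [h1, h2, Finset.mul_sum]
      refine Finset.sum_le_sum fun j _ => ?_
      by_cases hj : j.val < k - 1
      · rw [hzero j hj]; simp
      · refine mul_le_mul_of_nonneg_right ?_ normSq_nonneg
        exact ht (by simp [Fin.le_def]; omega)
    exact (mul_le_mul_iff_left₀ hNpos).mp hge
  · -- upper bound: use indices ≤ n-k
    obtain ⟨v, hveq, hv0, hvkill⟩ := hmain (fun i => ⟨i.val, by omega⟩)
      (fun i i' h => by
        apply Fin.ext
        have := congrArg Fin.val h
        simpa using this)
    obtain ⟨h1, h2⟩ := key v hveq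
    have hNpos : 0 < ∑ i, normSq (v i) := by
      obtain ⟨i, hi⟩ := Function.ne_iff.mp hv0
      exact Finset.sum_pos' (fun i _ => normSq_nonneg)
        ⟨i, Finset.mem_univ i, lt_of_le_of_ne normSq_nonneg (Ne.symm (normSq_ne_zero.mpr hi))⟩
    have hzero : ∀ j : Fin n, n - k < j.val → normSq (star (u j) ⬝ᵥ v) = 0 := by
      intro j hj
      rw [hvkill j (fun i h => by
        have := congrArg Fin.val h
        simp at this
        omega)]
      simp
    have hge : lam.re * (∑ i, normSq (v i)) ≤ t ⟨n - k, by omega⟩ * (∑ i, normSq (v i)) := by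
      rw [h1, h2, Finset.mul_sum]
      refine Finset.sum_le_sum fun j _ => ?_
      by_cases hj : n - k < j.val
      · rw [hzero j hj]; simp
      · refine mul_le_mul_of_nonneg_right ?_ normSq_nonneg
        exact ht (by simp [Fin.le_def]; omega)
    exact (mul_le_mul_iff_left₀ hNpos).mp hge
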